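/- The function ψ(λ) = 4·K(√λ), defined for real λ with 0 < λ < 1, satisfies the Picard–Fuchs differential equation 4λ(1−λ)·ψ''(λ) + 4(1−2λ)·ψ'(λ) − ψ(λ) = 0 on the interval (0,1). -/

import Mathlib

/-- The complete elliptic integral of the first kind. -/
noncomputable def Kint (x : ℝ) : ℝ :=
  ∫ t in (0:ℝ)..1, 1 / Real.sqrt ((1 - t ^ 2) * (1 - x ^ 2 * t ^ 2))

/-- The period `ψ(λ) = 4 K(√λ)` of the Legendre family of elliptic curves. -/
noncomputable def psiPeriod (l : ℝ) : ℝ := 4 * Kint (Real.sqrt l)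

open Real intervalIntegral Set MeasureTheory

noncomputable def PF0 (l t : ℝ) : ℝ := 4 / (Real.sqrt (1 - t^2) * Real.sqrt (1 - l*t^2))
noncomputable def PF1 (l t : ℝ) : ℝ :=
  2*t^2 / (Real.sqrt (1 - t^2) * ((1 - l*t^2) * Real.sqrt (1 - l*t^2)))
noncomputable def PF2 (l t : ℝ) : ℝ :=
  3*t^4 / (Real.sqrt (1 - t^2) * ((1 - l*t^2)^2 * Real.sqrt (1 - l*t^2)))

-- pointwise derivative in l of PF0
lemma hasDerivAt_PF0 {x t : ℝ} (ht0 : 0 < t) (ht1 : t < 1) (hx1 : x < 1) :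
    HasDerivAt (fun y => PF0 y t) (PF1 x t) x := by
  have hu : (0:ℝ) < 1 - x*t^2 := by nlinarith
  have hs1 : (0:ℝ) < Real.sqrt (1 - t^2) := Real.sqrt_pos.2 (by nlinarith)
  have hs2 : (0:ℝ) < Real.sqrt (1 - x*t^2) := Real.sqrt_pos.2 hu
  have hU : HasDerivAt (fun y : ℝ => 1 - y*t^2) (-t^2) x := by
    simpa using ((hasDerivAt_id x).mul_const (t^2)).const_sub 1
  have hS : HasDerivAt (fun y : ℝ => Real.sqrt (1 - y*t^2))
      (-t^2 / (2 * Real.sqrt (1 - x*t^2))) x := hU.sqrt hu.ne'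
  have hD : HasDerivAt (fun y : ℝ => Real.sqrt (1 - t^2) * Real.sqrt (1 - y*t^2))
      (Real.sqrt (1 - t^2) * (-t^2 / (2 * Real.sqrt (1 - x*t^2)))) x := hS.const_mul _
  have := (hasDerivAt_const x (4:ℝ)).div hD (by positivity)
  refine this.congr_deriv (Eq.symm ?_)
  have h2 : Real.sqrt (1 - x*t^2) ^ 2 = 1 - x*t^2 := Real.sq_sqrt hu.le
  unfold PF1
  set s1 := Real.sqrt (1-t^2) with hs1def
  set s2 := Real.sqrt (1-x*t^2) with hs2def
  rw [← h2]
  field_simp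
  ring

lemma hasDerivAt_PF1 {x t : ℝ} (ht0 : 0 < t) (ht1 : t < 1) (hx1 : x < 1) :
    HasDerivAt (fun y => PF1 y t) (PF2 x t) x := by
  have hu : (0:ℝ) < 1 - x*t^2 := by nlinarith
  have hs1 : (0:ℝ) < Real.sqrt (1 - t^2) := Real.sqrt_pos.2 (by nlinarith)
  have hs2 : (0:ℝ) < Real.sqrt (1 - x*t^2) := Real.sqrt_pos.2 hu
  have hU : HasDerivAt (fun y : ℝ => 1 - y*t^2) (-t^2) x := by
    simpa using ((hasDerivAt_id x).mul_const (t^2)).const_sub 1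
  have hS : HasDerivAt (fun y : ℝ => Real.sqrt (1 - y*t^2))
      (-t^2 / (2 * Real.sqrt (1 - x*t^2))) x := hU.sqrt hu.ne'
  have hD : HasDerivAt (fun y : ℝ => (1 - y*t^2) * Real.sqrt (1 - y*t^2))
      ((-t^2) * Real.sqrt (1 - x*t^2) + (1 - x*t^2) * (-t^2 / (2 * Real.sqrt (1 - x*t^2)))) x :=
    hU.mul hS
  have hD' : HasDerivAt (fun y : ℝ => Real.sqrt (1 - t^2) * ((1 - y*t^2) * Real.sqrt (1 - y*t^2)))
      (Real.sqrt (1 - t^2) * ((-t^2) * Real.sqrt (1 - x*t^2) + (1 - x*t^2) * (-t^2 / (2 * Real.sqrt (1 - x*t^2))))) x :=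
    hD.const_mul _
  have := (hasDerivAt_const x ((2:ℝ)*t^2)).div hD' (by positivity)
  refine this.congr_deriv (Eq.symm ?_)
  unfold PF2
  set s1 := Real.sqrt (1-t^2) with hs1def
  set s2 := Real.sqrt (1-x*t^2) with hs2def
  have h2 : s2 ^ 2 = 1 - x*t^2 := Real.sq_sqrt hu.le
  rw [← h2]
  field_simp
  ring

noncomputable def PG (l t : ℝ) : ℝ :=
  -4*t*Real.sqrt (1 - t^2) / ((1 - l*t^2) * Real.sqrt (1 - l*t^2))

lemma hasDerivAt_PG {l t : ℝ} (ht0 : 0 < t) (ht1 : t < 1) (hl0 : 0 < l) (hl1 : l < 1) :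
    HasDerivAt (fun s => PG l s)
      (4*l*(1-l)*PF2 l t + 4*(1-2*l)*PF1 l t - PF0 l t) t := by
  have hu : (0:ℝ) < 1 - l*t^2 := by nlinarith
  have hv : (0:ℝ) < 1 - t^2 := by nlinarith
  have hs1 : (0:ℝ) < Real.sqrt (1 - t^2) := Real.sqrt_pos.2 hv
  have hs2 : (0:ℝ) < Real.sqrt (1 - l*t^2) := Real.sqrt_pos.2 hu
  have hV : HasDerivAt (fun s : ℝ => 1 - s^2) (-2*t) t := by
    simpa using ((hasDerivAt_pow 2 t)).const_sub 1
  have hSV : HasDerivAt (fun s : ℝ => Real.sqrt (1 - s^2))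
      ((-2*t) / (2 * Real.sqrt (1 - t^2))) t := hV.sqrt hv.ne'
  have hN : HasDerivAt (fun s : ℝ => -4*s*Real.sqrt (1 - s^2))
      (-4*Real.sqrt (1 - t^2) + (-4*t) * ((-2*t) / (2 * Real.sqrt (1 - t^2)))) t := by
    have := ((hasDerivAt_id t).const_mul (-4:ℝ)).mul hSV
    refine this.congr_deriv (Eq.symm ?_)
    simp only [id_eq]; ring
  have hU : HasDerivAt (fun s : ℝ => 1 - l*s^2) (-2*l*t) t := by
    have := ((hasDerivAt_pow 2 t).const_mul l).const_sub 1
    refine this.congr_deriv (Eq.symm ?_)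
    simp; ring
  have hSU : HasDerivAt (fun s : ℝ => Real.sqrt (1 - l*s^2))
      ((-2*l*t) / (2 * Real.sqrt (1 - l*t^2))) t := hU.sqrt hu.ne'
  have hD : HasDerivAt (fun s : ℝ => (1 - l*s^2) * Real.sqrt (1 - l*s^2))
      ((-2*l*t) * Real.sqrt (1 - l*t^2) + (1 - l*t^2) * ((-2*l*t) / (2 * Real.sqrt (1 - l*t^2)))) t :=
    hU.mul hSU
  have := hN.div hD (by positivity)
  refine this.congr_deriv (Eq.symm ?_)
  unfold PF0 PF1 PF2
  set s1 := Real.sqrt (1-t^2) with hs1def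
  set s2 := Real.sqrt (1-l*t^2) with hs2def
  have h1 : s1 ^ 2 = 1 - t^2 := Real.sq_sqrt hv.le
  have h2 : s2 ^ 2 = 1 - l*t^2 := Real.sq_sqrt hu.le
  rw [← h2]
  field_simp
  linear_combination (3*t^2*l + s2^2) * h1 + (-s2^2 - 3*l*t^2) * h2

lemma meas_aux (f : ℝ → ℝ) (hf : Measurable f) :
    AEStronglyMeasurable f (volume.restrict (Set.uIoc (0:ℝ) 1)) :=
  hf.aestronglyMeasurable

lemma intInt_inv_sqrt : IntervalIntegrable (fun t : ℝ => 1 / Real.sqrt (1-t^2)) volume 0 1 := by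
  have hbase : IntervalIntegrable (fun t : ℝ => ((1:ℝ)-t) ^ (-(1/2):ℝ)) volume 0 1 := by
    have := (intervalIntegrable_rpow' (a := 0) (b := 1) (r := -(1/2)) (by norm_num)).comp_sub_left 1
    simpa using this.symm
  refine hbase.mono_fun ?_ ?_
  · exact meas_aux _ (measurable_const.div ((measurable_const.sub (measurable_id.pow_const 2)).sqrt))
  · rw [Filter.EventuallyLE, ae_restrict_iff' measurableSet_uIoc]
    refine Filter.Eventually.of_forall fun t ht => ?_
    rw [Set.uIoc_of_le (by norm_num : (0:ℝ) ≤ 1)] at ht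
    obtain ⟨ht0, ht1⟩ := ht
    rcases eq_or_lt_of_le ht1 with h | h
    · subst h
      norm_num [Real.zero_rpow]
    · have h1t : (0:ℝ) < 1 - t := by linarith
      have h1t2 : (0:ℝ) < 1 - t^2 := by nlinarith
      have hs : (0:ℝ) < Real.sqrt (1-t^2) := Real.sqrt_pos.2 h1t2
      have hrw : ((1:ℝ)-t) ^ (-(1/2):ℝ) = 1 / Real.sqrt (1-t) := by
        rw [Real.rpow_neg h1t.le, ← Real.sqrt_eq_rpow, one_div]
      rw [Real.norm_eq_abs, Real.norm_eq_abs, hrw, abs_of_nonneg (by positivity),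
        abs_of_nonneg (by positivity)]
      apply div_le_div_of_nonneg_left (by norm_num) (Real.sqrt_pos.2 h1t)
      apply Real.sqrt_le_sqrt
      nlinarith

lemma intInt_of_le (f : ℝ → ℝ) (hm : Measurable f) (C : ℝ)
    (h : ∀ t ∈ Set.Ioc (0:ℝ) 1, ‖f t‖ ≤ C * (1/Real.sqrt (1-t^2))) :
    IntervalIntegrable f volume 0 1 := by
  refine (intInt_inv_sqrt.const_mul C).mono_fun (meas_aux f hm) ?_
  rw [Filter.EventuallyLE, ae_restrict_iff' measurableSet_uIoc]
  refine Filter.Eventually.of_forall fun t ht => ?_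
  rw [Set.uIoc_of_le (by norm_num : (0:ℝ) ≤ 1)] at ht
  exact (h t ht).trans (le_abs_self _)

lemma u_lower {l x t : ℝ} (h0 : 0 < l) (h1 : l < 1) (hx : |x - l| < (1-l)/2)
    (ht0 : 0 ≤ t) (ht1 : t ≤ 1) : (1-l)/2 ≤ 1 - x*t^2 := by
  obtain ⟨hx1, hx2⟩ := abs_lt.mp hx
  have ht2 : t^2 ≤ 1 := by nlinarith
  rcases le_or_gt x 0 with h | h
  · nlinarith [sq_nonneg t]
  · nlinarith [sq_nonneg t]

lemma PF1_bound {l x t : ℝ} (h0 : 0 < l) (h1 : l < 1) (hx : |x - l| < (1-l)/2)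
    (ht0 : 0 < t) (ht1 : t ≤ 1) :
    ‖PF1 x t‖ ≤ (2/(((1-l)/2)*Real.sqrt ((1-l)/2))) * (1/Real.sqrt (1-t^2)) := by
  have hd : (0:ℝ) < (1-l)/2 := by linarith
  have hu : (1-l)/2 ≤ 1 - x*t^2 := u_lower h0 h1 hx ht0.le ht1
  have hub : (0:ℝ) < 1 - x*t^2 := lt_of_lt_of_le hd hu
  rcases eq_or_lt_of_le ht1 with h | h
  · subst h; unfold PF1; norm_num
  · have hs1 : (0:ℝ) < Real.sqrt (1-t^2) := Real.sqrt_pos.2 (by nlinarith)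
    have hsd : (0:ℝ) < Real.sqrt ((1-l)/2) := Real.sqrt_pos.2 hd
    have hsu : (0:ℝ) < Real.sqrt (1-x*t^2) := Real.sqrt_pos.2 hub
    unfold PF1
    rw [Real.norm_eq_abs, abs_of_nonneg (by positivity)]
    calc 2*t^2 / (Real.sqrt (1-t^2) * ((1-x*t^2) * Real.sqrt (1-x*t^2)))
        ≤ 2 / (Real.sqrt (1-t^2) * (((1-l)/2) * Real.sqrt ((1-l)/2))) := by
          refine div_le_div₀ (by norm_num) (by nlinarith) (by positivity) ?_
          exact mul_le_mul_of_nonneg_left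
            (mul_le_mul hu (Real.sqrt_le_sqrt hu) hsd.le hub.le) hs1.le
      _ = (2/(((1-l)/2)*Real.sqrt ((1-l)/2))) * (1/Real.sqrt (1-t^2)) := by
          field_simp

lemma PF2_bound {l x t : ℝ} (h0 : 0 < l) (h1 : l < 1) (hx : |x - l| < (1-l)/2)
    (ht0 : 0 < t) (ht1 : t ≤ 1) :
    ‖PF2 x t‖ ≤ (3/((((1-l)/2)^2)*Real.sqrt ((1-l)/2))) * (1/Real.sqrt (1-t^2)) := by
  have hd : (0:ℝ) < (1-l)/2 := by linarith
  have hu : (1-l)/2 ≤ 1 - x*t^2 := u_lower h0 h1 hx ht0.le ht1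
  have hub : (0:ℝ) < 1 - x*t^2 := lt_of_lt_of_le hd hu
  rcases eq_or_lt_of_le ht1 with h | h
  · subst h; unfold PF2; norm_num
  · have hs1 : (0:ℝ) < Real.sqrt (1-t^2) := Real.sqrt_pos.2 (by nlinarith)
    have hsd : (0:ℝ) < Real.sqrt ((1-l)/2) := Real.sqrt_pos.2 hd
    have hsu : (0:ℝ) < Real.sqrt (1-x*t^2) := Real.sqrt_pos.2 hub
    unfold PF2
    rw [Real.norm_eq_abs, abs_of_nonneg (by positivity)]
    calc 3*t^4 / (Real.sqrt (1-t^2) * ((1-x*t^2)^2 * Real.sqrt (1-x*t^2)))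
        ≤ 3 / (Real.sqrt (1-t^2) * ((((1-l)/2)^2) * Real.sqrt ((1-l)/2))) := by
          refine div_le_div₀ (by norm_num) (by
            have ht2 : t^2 ≤ 1 := by nlinarith
            nlinarith [sq_nonneg t, mul_nonneg (sub_nonneg.2 ht2) (by positivity : (0:ℝ) ≤ 1+t^2)]) (by positivity) ?_
          have ht2 : t^2 ≤ 1 := by nlinarith
          refine mul_le_mul_of_nonneg_left
            (mul_le_mul (by nlinarith [sq_nonneg (1-x*t^2 - (1-l)/2)]) (Real.sqrt_le_sqrt hu) hsd.le (by positivity)) hs1.le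
      _ = (3/((((1-l)/2)^2)*Real.sqrt ((1-l)/2))) * (1/Real.sqrt (1-t^2)) := by
          field_simp

lemma PF0_bound {l x t : ℝ} (h0 : 0 < l) (h1 : l < 1) (hx : |x - l| < (1-l)/2)
    (ht0 : 0 < t) (ht1 : t ≤ 1) :
    ‖PF0 x t‖ ≤ (4/Real.sqrt ((1-l)/2)) * (1/Real.sqrt (1-t^2)) := by
  have hd : (0:ℝ) < (1-l)/2 := by linarith
  have hu : (1-l)/2 ≤ 1 - x*t^2 := u_lower h0 h1 hx ht0.le ht1
  have hub : (0:ℝ) < 1 - x*t^2 := lt_of_lt_of_le hd hu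
  rcases eq_or_lt_of_le ht1 with h | h
  · subst h; unfold PF0; norm_num
  · have hs1 : (0:ℝ) < Real.sqrt (1-t^2) := Real.sqrt_pos.2 (by nlinarith)
    have hsd : (0:ℝ) < Real.sqrt ((1-l)/2) := Real.sqrt_pos.2 hd
    have hsu : (0:ℝ) < Real.sqrt (1-x*t^2) := Real.sqrt_pos.2 hub
    unfold PF0
    rw [Real.norm_eq_abs, abs_of_nonneg (by positivity)]
    calc 4 / (Real.sqrt (1-t^2) * Real.sqrt (1-x*t^2))
        ≤ 4 / (Real.sqrt (1-t^2) * Real.sqrt ((1-l)/2)) := by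
          refine div_le_div₀ (by norm_num) le_rfl (by positivity) ?_
          exact mul_le_mul_of_nonneg_left (Real.sqrt_le_sqrt hu) hs1.le
      _ = (4/Real.sqrt ((1-l)/2)) * (1/Real.sqrt (1-t^2)) := by
          field_simp

lemma measPF0 (x : ℝ) : Measurable (fun t => PF0 x t) := by
  unfold PF0
  exact measurable_const.div (((measurable_const.sub (measurable_id.pow_const 2)).sqrt).mul
    ((measurable_const.sub ((measurable_id.pow_const 2).const_mul x)).sqrt))

lemma measPF1 (x : ℝ) : Measurable (fun t => PF1 x t) := by
  unfold PF1
  exact ((measurable_id.pow_const 2).const_mul 2).div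
    (((measurable_const.sub (measurable_id.pow_const 2)).sqrt).mul
      ((measurable_const.sub ((measurable_id.pow_const 2).const_mul x)).mul
        ((measurable_const.sub ((measurable_id.pow_const 2).const_mul x)).sqrt)))

lemma measPF2 (x : ℝ) : Measurable (fun t => PF2 x t) := by
  unfold PF2
  exact ((measurable_id.pow_const 4).const_mul 3).div
    (((measurable_const.sub (measurable_id.pow_const 2)).sqrt).mul
      (((measurable_const.sub ((measurable_id.pow_const 2).const_mul x)).pow_const 2).mul
        ((measurable_const.sub ((measurable_id.pow_const 2).const_mul x)).sqrt)))

lemma ae_ne_one : ∀ᵐ t : ℝ ∂volume, t ≠ (1:ℝ) := by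
  have h : (volume : Measure ℝ) {(1:ℝ)} = 0 := measure_singleton 1
  exact (measure_eq_zero_iff_ae_notMem.mp h).mono (fun t ht => by simpa using ht)

lemma selfball {l : ℝ} (h1 : l < 1) : |l - l| < (1-l)/2 := by
  simp; linarith

lemma intPF0 {l : ℝ} (h0 : 0 < l) (h1 : l < 1) : IntervalIntegrable (fun t => PF0 l t) volume 0 1 :=
  intInt_of_le _ (measPF0 l) _ (fun t ht => PF0_bound h0 h1 (selfball h1) ht.1 ht.2)

lemma intPF1 {l : ℝ} (h0 : 0 < l) (h1 : l < 1) : IntervalIntegrable (fun t => PF1 l t) volume 0 1 :=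
  intInt_of_le _ (measPF1 l) _ (fun t ht => PF1_bound h0 h1 (selfball h1) ht.1 ht.2)

lemma intPF2 {l : ℝ} (h0 : 0 < l) (h1 : l < 1) : IntervalIntegrable (fun t => PF2 l t) volume 0 1 :=
  intInt_of_le _ (measPF2 l) _ (fun t ht => PF2_bound h0 h1 (selfball h1) ht.1 ht.2)

lemma hasDerivAt_int_PF0 {l : ℝ} (h0 : 0 < l) (h1 : l < 1) :
    HasDerivAt (fun y => ∫ t in (0:ℝ)..1, PF0 y t) (∫ t in (0:ℝ)..1, PF1 l t) l := by
  have hd : (0:ℝ) < (1-l)/2 := by linarith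
  refine (intervalIntegral.hasDerivAt_integral_of_dominated_loc_of_deriv_le
    (F := fun y t => PF0 y t) (F' := fun y t => PF1 y t)
    (bound := fun t => (2/(((1-l)/2)*Real.sqrt ((1-l)/2))) * (1/Real.sqrt (1-t^2)))
    (Metric.ball_mem_nhds l hd) (Filter.Eventually.of_forall fun x => meas_aux _ (measPF0 x))
    (intPF0 h0 h1) (meas_aux _ (measPF1 l)) ?_ (intInt_inv_sqrt.const_mul _) ?_).2
  · refine Filter.Eventually.of_forall fun t ht x hx => ?_
    rw [Set.uIoc_of_le (by norm_num : (0:ℝ) ≤ 1)] at ht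
    rw [Metric.mem_ball, Real.dist_eq] at hx
    exact PF1_bound h0 h1 hx ht.1 ht.2
  · filter_upwards [ae_ne_one] with t htne ht x hx
    rw [Set.uIoc_of_le (by norm_num : (0:ℝ) ≤ 1)] at ht
    rw [Metric.mem_ball, Real.dist_eq] at hx
    obtain ⟨hx1, hx2⟩ := abs_lt.mp hx
    exact hasDerivAt_PF0 ht.1 (lt_of_le_of_ne ht.2 htne) (by linarith)

lemma hasDerivAt_int_PF1 {l : ℝ} (h0 : 0 < l) (h1 : l < 1) :
    HasDerivAt (fun y => ∫ t in (0:ℝ)..1, PF1 y t) (∫ t in (0:ℝ)..1, PF2 l t) l := by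
  have hd : (0:ℝ) < (1-l)/2 := by linarith
  refine (intervalIntegral.hasDerivAt_integral_of_dominated_loc_of_deriv_le
    (F := fun y t => PF1 y t) (F' := fun y t => PF2 y t)
    (bound := fun t => (3/((((1-l)/2)^2)*Real.sqrt ((1-l)/2))) * (1/Real.sqrt (1-t^2)))
    (Metric.ball_mem_nhds l hd) (Filter.Eventually.of_forall fun x => meas_aux _ (measPF1 x))
    (intPF1 h0 h1) (meas_aux _ (measPF2 l)) ?_ (intInt_inv_sqrt.const_mul _) ?_).2
  · refine Filter.Eventually.of_forall fun t ht x hx => ?_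
    rw [Set.uIoc_of_le (by norm_num : (0:ℝ) ≤ 1)] at ht
    rw [Metric.mem_ball, Real.dist_eq] at hx
    exact PF2_bound h0 h1 hx ht.1 ht.2
  · filter_upwards [ae_ne_one] with t htne ht x hx
    rw [Set.uIoc_of_le (by norm_num : (0:ℝ) ≤ 1)] at ht
    rw [Metric.mem_ball, Real.dist_eq] at hx
    obtain ⟨hx1, hx2⟩ := abs_lt.mp hx
    exact hasDerivAt_PF1 ht.1 (lt_of_le_of_ne ht.2 htne) (by linarith)

lemma psi_eq {l : ℝ} (h0 : 0 < l) (h1 : l < 1) :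
    psiPeriod l = ∫ t in (0:ℝ)..1, PF0 l t := by
  unfold psiPeriod Kint
  rw [← intervalIntegral.integral_const_mul]
  refine intervalIntegral.integral_congr fun t ht => ?_
  rw [Set.uIcc_of_le (by norm_num : (0:ℝ) ≤ 1)] at ht
  have h2 : Real.sqrt l ^ 2 = l := Real.sq_sqrt h0.le
  show 4 * (1 / Real.sqrt ((1 - t ^ 2) * (1 - Real.sqrt l ^ 2 * t ^ 2))) = PF0 l t
  rw [h2, Real.sqrt_mul (show (0:ℝ) ≤ 1 - t^2 by nlinarith [ht.1, ht.2])]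
  unfold PF0; ring

lemma integral_combo {l : ℝ} (h0 : 0 < l) (h1 : l < 1) :
    ∫ t in (0:ℝ)..1, (4*l*(1-l)*PF2 l t + 4*(1-2*l)*PF1 l t - PF0 l t) = 0 := by
  have hupos : ∀ t ∈ Set.Icc (0:ℝ) 1, (0:ℝ) < 1 - l*t^2 := fun t ht => by
    have h2 : t^2 ≤ 1 := by nlinarith [ht.1, ht.2]
    nlinarith [sq_nonneg t]
  have hcont : ContinuousOn (fun t => PG l t) (Set.Icc 0 1) := by
    unfold PG
    refine ContinuousOn.div ?_ ?_ ?_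
    · exact ((continuous_const.mul continuous_id).mul
        ((continuous_const.sub (continuous_pow 2)).sqrt)).continuousOn
    · exact ((continuous_const.sub (continuous_const.mul (continuous_pow 2))).mul
        ((continuous_const.sub (continuous_const.mul (continuous_pow 2))).sqrt)).continuousOn
    · intro t ht
      have := hupos t ht
      have hs : (0:ℝ) < Real.sqrt (1 - l*t^2) := Real.sqrt_pos.2 this
      positivity
  have hint : IntervalIntegrable
      (fun t => 4*l*(1-l)*PF2 l t + 4*(1-2*l)*PF1 l t - PF0 l t) volume 0 1 :=
    (((intPF2 h0 h1).const_mul _).add ((intPF1 h0 h1).const_mul _)).sub (intPF0 h0 h1)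
  have := intervalIntegral.integral_eq_sub_of_hasDeriv_right_of_le (by norm_num : (0:ℝ) ≤ 1)
    hcont (fun x hx => (hasDerivAt_PG hx.1 hx.2 h0 h1).hasDerivWithinAt) hint
  rw [this]
  unfold PG
  norm_num


/-- The Picard-Fuchs equation `4λ(1-λ)ψ'' + 4(1-2λ)ψ' - ψ = 0` on `(0,1)`. -/
theorem picard_fuchs_legendre (l : ℝ) (h0 : 0 < l) (h1 : l < 1) :
    4 * l * (1 - l) * deriv (deriv psiPeriod) l +
      4 * (1 - 2 * l) * deriv psiPeriod l - psiPeriod l = 0 := by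
  have e1 : deriv psiPeriod =ᶠ[nhds l] fun y => ∫ t in (0:ℝ)..1, PF1 y t := by
    refine Filter.eventually_of_mem (isOpen_Ioo.mem_nhds (Set.mem_Ioo.2 ⟨h0, h1⟩)) ?_
    intro x hx
    have ex : psiPeriod =ᶠ[nhds x] fun y => ∫ t in (0:ℝ)..1, PF0 y t := by
      refine Filter.eventually_of_mem (isOpen_Ioo.mem_nhds hx) ?_
      exact fun y hy => psi_eq hy.1 hy.2
    rw [ex.deriv_eq]
    exact (hasDerivAt_int_PF0 hx.1 hx.2).deriv
  have d1 : deriv psiPeriod l = ∫ t in (0:ℝ)..1, PF1 l t := e1.self_of_nhds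
  have d2 : deriv (deriv psiPeriod) l = ∫ t in (0:ℝ)..1, PF2 l t := by
    rw [e1.deriv_eq]
    exact (hasDerivAt_int_PF1 h0 h1).deriv
  rw [d1, d2, psi_eq h0 h1]
  have hc := integral_combo h0 h1
  rw [intervalIntegral.integral_sub (((intPF2 h0 h1).const_mul _).add ((intPF1 h0 h1).const_mul _))
    (intPF0 h0 h1), intervalIntegral.integral_add ((intPF2 h0 h1).const_mul _)
    ((intPF1 h0 h1).const_mul _), intervalIntegral.integral_const_mul,
    intervalIntegral.integral_const_mul] at hc
  linarith
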